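/- Under the same local hidden variable assumptions as CHSH, if additionally perfect anticorrelation holds, E(b',b') = −1 for the setting b', then |E(a,b) − E(a,b')| − E(b',b) ≤ 1 (Bell's original inequality). -/

import Mathlib

open MeasureTheory

theorem bell_original_inequality
    {Λ Setting : Type*} [MeasurableSpace Λ] (μ : Measure Λ) [SigmaFinite μ]
    (ρ : Λ → ℝ) (hρ_meas : Measurable ρ) (hρ_nonneg : ∀ l, 0 ≤ ρ l)
    (hρ_int : Integrable ρ μ) (hρ_one : ∫ l, ρ l ∂μ = 1)
    (A B : Setting → Λ → ℝ)
    (hA_meas : ∀ a, Measurable (A a)) (hB_meas : ∀ b, Measurable (B b))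
    (hA : ∀ a l, |A a l| ≤ 1) (hB : ∀ b l, |B b l| ≤ 1)
    (E : Setting → Setting → ℝ)
    (hE : ∀ a b, E a b = ∫ l, ρ l * A a l * B b l ∂μ)
    (a b b' : Setting)
    (hanti : E b' b' = -1) :
    |E a b - E a b'| - E b' b ≤ 1 := by
  -- integrability of ρ * A x * B y
  have hint : ∀ x y, Integrable (fun l => ρ l * A x l * B y l) μ := by
    intro x y
    have : Integrable (fun l => (A x l * B y l) * ρ l) μ := by
      apply hρ_int.bdd_mul (c := 1)
      · exact ((hA_meas x).mul (hB_meas y)).aestronglyMeasurable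
      · refine Filter.Eventually.of_forall (fun l => ?_)
        rw [Real.norm_eq_abs, abs_mul]
        exact mul_le_one₀ (hA x l) (abs_nonneg _) (hB y l)
    simpa [mul_comm, mul_assoc, mul_left_comm] using this
  -- ρ (1 + A b' B b') = 0 a.e.
  have hg_int : Integrable (fun l => ρ l * (1 + A b' l * B b' l)) μ := by
    have := hρ_int.add (hint b' b')
    simpa [mul_add, mul_assoc, Pi.add_def] using this
  have hg_nonneg : ∀ l, 0 ≤ ρ l * (1 + A b' l * B b' l) := by
    intro l
    apply mul_nonneg (hρ_nonneg l)
    have h1 : |A b' l * B b' l| ≤ 1 := by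
      rw [abs_mul]; exact mul_le_one₀ (hA b' l) (abs_nonneg _) (hB b' l)
    have := abs_le.mp h1
    linarith [this.1]
  have hg_zero : ∫ l, ρ l * (1 + A b' l * B b' l) ∂μ = 0 := by
    rw [show (fun l => ρ l * (1 + A b' l * B b' l)) = fun l => ρ l + ρ l * A b' l * B b' l by
      funext l; ring]
    rw [integral_add hρ_int (hint b' b'), hρ_one, ← hE b' b', hanti]
    ring
  have hae : ∀ᵐ l ∂μ, ρ l * (1 + A b' l * B b' l) = 0 := by
    have := (integral_eq_zero_iff_of_nonneg (fun l => hg_nonneg l) hg_int).mp hg_zero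
    filter_upwards [this] with l hl using hl
  -- pointwise a.e. bound
  have hkey : ∀ᵐ l ∂μ, |ρ l * A a l * B b l - ρ l * A a l * B b' l|
      ≤ ρ l * (1 + A b' l * B b l) := by
    filter_upwards [hae] with l hl
    rcases mul_eq_zero.mp hl with hz | hz
    · simp [hz]
    · have heq : A b' l * B b' l = -1 := by linarith
      have hx := abs_le.mp (hA a l)
      have hy := abs_le.mp (hB b l)
      have hz1 := abs_le.mp (hA b' l)
      have hz2 := abs_le.mp (hB b' l)
      have hsum : A b' l = - B b' l := by nlinarith [sq_nonneg (A b' l + B b' l)]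
      have hsq : A b' l ^ 2 = 1 := by nlinarith
      have hr := hρ_nonneg l
      rw [abs_le]
      constructor
      · nlinarith [mul_nonneg hr (sq_nonneg (A a l + 1)), mul_nonneg hr (sq_nonneg (A a l - 1)),
          mul_nonneg (mul_nonneg hr (sub_nonneg.mpr hy.2)) (sub_nonneg.mpr hx.2),
          mul_nonneg (mul_nonneg hr (sub_nonneg.mpr (neg_le.mp hy.1))) (sub_nonneg.mpr hx.2),
          mul_nonneg (mul_nonneg hr (sub_nonneg.mpr hy.2)) (by linarith : (0:ℝ) ≤ A a l + 1),
          mul_nonneg (mul_nonneg hr (by linarith : (0:ℝ) ≤ 1 + B b l)) (by linarith : (0:ℝ) ≤ A a l + 1)]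
      · nlinarith [mul_nonneg (mul_nonneg hr (sub_nonneg.mpr hy.2)) (sub_nonneg.mpr hx.2),
          mul_nonneg (mul_nonneg hr (by linarith : (0:ℝ) ≤ 1 + B b l)) (sub_nonneg.mpr hx.2),
          mul_nonneg (mul_nonneg hr (sub_nonneg.mpr hy.2)) (by linarith : (0:ℝ) ≤ A a l + 1),
          mul_nonneg (mul_nonneg hr (by linarith : (0:ℝ) ≤ 1 + B b l)) (by linarith : (0:ℝ) ≤ A a l + 1)]
  -- now integrate
  have hdiff : E a b - E a b' = ∫ l, (ρ l * A a l * B b l - ρ l * A a l * B b' l) ∂μ := by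
    rw [hE a b, hE a b', ← integral_sub (hint a b) (hint a b')]
  have hrhs_int : Integrable (fun l => ρ l * (1 + A b' l * B b l)) μ := by
    have := hρ_int.add (hint b' b)
    simpa [mul_add, mul_assoc, Pi.add_def] using this
  have h1 : |E a b - E a b'| ≤ ∫ l, ρ l * (1 + A b' l * B b l) ∂μ := by
    rw [hdiff]
    calc |∫ l, (ρ l * A a l * B b l - ρ l * A a l * B b' l) ∂μ|
        ≤ ∫ l, |ρ l * A a l * B b l - ρ l * A a l * B b' l| ∂μ :=
          by simpa [Real.norm_eq_abs] using
            norm_integral_le_integral_norm (fun l => ρ l * A a l * B b l - ρ l * A a l * B b' l)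
      _ ≤ ∫ l, ρ l * (1 + A b' l * B b l) ∂μ :=
          integral_mono_ae ((hint a b).sub (hint a b')).abs hrhs_int hkey
  have h2 : ∫ l, ρ l * (1 + A b' l * B b l) ∂μ = 1 + E b' b := by
    rw [show (fun l => ρ l * (1 + A b' l * B b l)) = fun l => ρ l + ρ l * A b' l * B b l by
      funext l; ring]
    rw [integral_add hρ_int (hint b' b), hρ_one, hE b' b]
  linarith [h1, h2.symm ▸ h1]
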